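/- Let F_n be the free group on generators x_1, …, x_n, and let φ be the automorphism of F_n fixing x_1, …, x_{n-1} and sending x_n to w⁻¹ x_n w, where w is a fixed element of the subgroup generated by x_1, …, x_{n-1}, with w ≠ 1. Then the fixed subgroup of φ is exactly the subgroup generated by x_1, …, x_{n-1}. -/

import Mathlib

open Monoid Monoid.CoprodI Monoid.CoprodI.Word

namespace MyFix

variable {ι : Type*} [DecidableEq ι] {M : ι → Type*} [∀ i, Group (M i)] [∀ i, DecidableEq (M i)]

theorem equiv_symm_eq (w : Word M) : (Word.equiv).symm w = prod w := rfl

theorem prod_equiv (x : CoprodI M) : prod (Word.equiv x) = x := by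
  rw [← equiv_symm_eq]; exact (Word.equiv).symm_apply_apply x

theorem equiv_prod (w : Word M) : Word.equiv (prod w) = w := by
  rw [← equiv_symm_eq]; exact (Word.equiv).apply_symm_apply w

theorem equiv_mul (x y : CoprodI M) : Word.equiv (x * y) = x • Word.equiv y := by
  have h : prod (x • Word.equiv y) = x * y := by rw [prod_smul, prod_equiv]
  rw [← h, equiv_prod]

theorem equiv_one : Word.equiv (1 : CoprodI M) = Word.empty := by
  show (1 : CoprodI M) • Word.empty = _
  rw [one_smul]

theorem equiv_of_mul {i : ι} (m : M i) (hm : m ≠ 1) (x : CoprodI M)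
    (hx : (Word.equiv x).fstIdx ≠ some i) :
    Word.equiv (of m * x) = Word.cons m (Word.equiv x) hx hm := by
  rw [equiv_mul]; exact cons_eq_smul.symm

end MyFix

namespace MyFix

variable {ι : Type*} [DecidableEq ι] {M : ι → Type*} [∀ i, Group (M i)] [∀ i, DecidableEq (M i)]

/-- inverse of a word: reverse the list and invert each letter. -/
def invRev (w : Word M) : Word M where
  toList := (w.toList.map fun l => ⟨l.1, l.2⁻¹⟩).reverse
  ne_one := by
    intro l hl
    rw [List.mem_reverse, List.mem_map] at hl
    obtain ⟨a, ha, rfl⟩ := hl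
    simpa using w.ne_one a ha
  chain_ne := by
    rw [List.isChain_reverse, List.isChain_map]
    refine List.IsChain.imp ?_ w.chain_ne
    intro a b hab
    exact Ne.symm hab

@[simp] theorem invRev_toList (w : Word M) :
    (invRev w).toList = (w.toList.map fun l => ⟨l.1, l.2⁻¹⟩).reverse := rfl

theorem prod_invRev (w : Word M) : prod (invRev w) = (prod w)⁻¹ := by
  unfold prod
  rw [invRev_toList]
  induction w.toList with
  | nil => simp
  | cons a t ih =>
    simp only [List.map_cons, List.reverse_cons, List.map_append, List.prod_append,
      List.prod_cons, List.map_map, List.map_reverse, List.prod_nil, mul_inv_rev, one_mul,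
      mul_one] at ih ⊢
    simp [ih]

theorem equiv_inv (x : CoprodI M) : Word.equiv x⁻¹ = invRev (Word.equiv x) := by
  have h : prod (invRev (Word.equiv x)) = x⁻¹ := by rw [prod_invRev, prod_equiv]
  rw [← h, equiv_prod]

/-- letterwise image of a word under index-preserving injective maps. -/
def wmap (f : ∀ i, M i →* M i) (hf : ∀ i (m : M i), m ≠ 1 → f i m ≠ 1) (w : Word M) :
    Word M where
  toList := w.toList.map fun l => ⟨l.1, f l.1 l.2⟩
  ne_one := by
    intro l hl
    rw [List.mem_map] at hl
    obtain ⟨a, ha, rfl⟩ := hl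
    exact hf a.1 a.2 (w.ne_one a ha)
  chain_ne := by
    rw [List.isChain_map]
    refine List.IsChain.imp ?_ w.chain_ne
    intro a b hab
    exact hab

theorem prod_wmap (f : ∀ i, M i →* M i) (hf : ∀ i (m : M i), m ≠ 1 → f i m ≠ 1)
    (ρ : CoprodI M →* CoprodI M) (hρ : ∀ i (m : M i), ρ (of m) = of (f i m)) (w : Word M) :
    prod (wmap f hf w) = ρ (prod w) := by
  show ((w.toList.map fun l => (⟨l.1, f l.1 l.2⟩ : Σ i, M i)).map fun l => of l.snd).prod
      = ρ (w.toList.map fun l => of l.snd).prod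
  induction w.toList with
  | nil => simp
  | cons a t ih => simp [← List.map_map, ih, hρ]

end MyFix

namespace MyFix

variable {ι : Type*} [DecidableEq ι] {M : ι → Type*} [∀ i, Group (M i)] [∀ i, DecidableEq (M i)]

theorem invRev_invRev (w : Word M) : invRev (invRev w) = w := by
  apply Word.ext
  simp only [invRev, List.map_reverse, List.reverse_reverse, List.map_map]
  induction w.toList with
  | nil => rfl
  | cons a t ih => simp [ih]

theorem invRev_cons_toList {i} (m : M i) (w : Word M) (h1 : w.fstIdx ≠ some i) (h2 : m ≠ 1) :
    (invRev (Word.cons m w h1 h2)).toList = (invRev w).toList ++ [⟨i, m⁻¹⟩] := by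
  simp [invRev, Word.cons]

theorem rcons_equivPair (i : ι) (w : Word M) : Word.rcons (Word.equivPair i w) = w := by
  rw [← Word.equivPair_symm]
  exact (Word.equivPair i).symm_apply_apply w

theorem decomp (i : ι) (x : CoprodI M) :
    x = of (Word.equivPair i (Word.equiv x)).head
        * prod (Word.equivPair i (Word.equiv x)).tail := by
  conv_lhs => rw [← prod_equiv x, ← rcons_equivPair i (Word.equiv x)]
  rw [Word.prod_rcons]

theorem word_ne_empty_of_ne_one {x : CoprodI M} (hx : x ≠ 1) : Word.equiv x ≠ Word.empty := by
  intro hc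
  apply hx
  have := congrArg prod hc
  rwa [prod_equiv, Word.prod_empty] at this

theorem toList_ne_nil_of_ne_one {x : CoprodI M} (hx : x ≠ 1) : (Word.equiv x).toList ≠ [] := by
  intro hc
  exact word_ne_empty_of_ne_one hx (Word.ext hc)

end MyFix

namespace MyFix

variable {M : Bool → Type*} [∀ b, Group (M b)] [∀ b, DecidableEq (M b)]

theorem fstIdx_eq_true {x : CoprodI M} (hx : x ≠ 1)
    (hf : (Word.equiv x).fstIdx ≠ some false) : (Word.equiv x).fstIdx = some true := by
  have hnil := toList_ne_nil_of_ne_one hx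
  cases ho : (Word.equiv x).fstIdx with
  | none =>
    exfalso
    apply hnil
    unfold Word.fstIdx at ho
    rw [Option.map_eq_none_iff] at ho
    exact List.head?_eq_none_iff.mp ho
  | some b =>
    cases b with
    | false => exact absurd ho hf
    | true => rfl

end MyFix

namespace MyFix

variable {M : Bool → Type*} [∀ b, Group (M b)] [∀ b, DecidableEq (M b)]

set_option maxHeartbeats 2000000 in
theorem core (ρ : CoprodI M →* CoprodI M)
    (h : M false) (hh : h ≠ 1)
    (hρF : ∀ a : M false, ρ (of a) = of (h * a * h⁻¹))
    (hρT : ∀ t : M true, ρ (of t) = of t)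
    (g : CoprodI M) (hg : ρ g = of h * g * (of h)⁻¹) :
    ∃ a : M false, g = of a := by
  classical
  -- the letterwise map
  set f : ∀ b, M b →* M b :=
    fun b => Bool.rec ((MulAut.conj h).toMonoidHom) (MonoidHom.id (M true)) b with hfdef
  have hf : ∀ b (m : M b), m ≠ 1 → f b m ≠ 1 := by
    intro b
    cases b with
    | false =>
      intro m hm hc
      apply hm
      have := (MulAut.conj h).injective (a₁ := m) (a₂ := 1)
      simp only [map_one] at this
      exact this hc
    | true => intro m hm hc; exact hm hc
  have hρ : ∀ b (m : M b), ρ (of m) = of (f b m) := by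
    intro b
    cases b with
    | false => intro m; rw [hρF]; rfl
    | true => intro m; rw [hρT]; rfl
  -- strip the A-head of g
  set p := Word.equivPair false (Word.equiv g) with hp
  have hdec := decomp false g
  by_cases hempty : p.tail = Word.empty
  · refine ⟨p.head, ?_⟩
    rw [hdec, ← hp, hempty, Word.prod_empty, mul_one]
  · exfalso
    set m₁ := prod p.tail with hm₁
    have hm₁w : Word.equiv m₁ = p.tail := equiv_prod _
    have hm₁ne : m₁ ≠ 1 := by
      intro h1
      apply hempty
      rw [← hm₁w, h1, equiv_one]
    have hm₁fst : (Word.equiv m₁).fstIdx = some true :=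
      fstIdx_eq_true hm₁ne (by rw [hm₁w]; exact p.fstIdx_ne)
    -- transfer the fixed-point equation to m₁
    have key : ρ m₁ = of h * m₁ * (of h)⁻¹ := by
      have e := hg
      rw [hdec, map_mul, hρF] at e
      have e2 : ρ m₁ = (of (h * p.head * h⁻¹))⁻¹ * (of h * (of p.head * m₁) * (of h)⁻¹) := by
        rw [← e, ← hp]; group
      rw [e2, ← map_inv, ← mul_assoc, ← mul_assoc, ← mul_assoc, ← map_mul, ← map_mul]
      have harg : (h * p.head * h⁻¹)⁻¹ * h * p.head = h := by group
      rw [harg]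
    -- strip the A-tail of m₁ (i.e. the A-head of m₁⁻¹)
    set pr := Word.equivPair false (Word.equiv m₁⁻¹) with hpr
    have hdecr := decomp false m₁⁻¹
    set b := pr.head with hb
    set q : CoprodI M := (prod pr.tail)⁻¹ with hq
    have hqinvw : Word.equiv q⁻¹ = pr.tail := by rw [hq, inv_inv]; exact equiv_prod _
    have hm₁eq : m₁ = q * (of b)⁻¹ := by
      have : m₁⁻¹ = of b * q⁻¹ := by rw [hq, inv_inv]; exact hdecr
      calc m₁ = (m₁⁻¹)⁻¹ := by rw [inv_inv]
      _ = (of b * q⁻¹)⁻¹ := by rw [this]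
      _ = q * (of b)⁻¹ := by rw [mul_inv_rev, inv_inv]
    -- fixed-point equation for q
    have keyr : ρ m₁⁻¹ = of h * m₁⁻¹ * (of h)⁻¹ := by
      rw [map_inv, key]
      simp [mul_inv_rev, mul_assoc]
    have keyq : ρ q = of h * q * (of h)⁻¹ := by
      have e : of (h * b * h⁻¹) * ρ q⁻¹ = of h * (of b * q⁻¹) * (of h)⁻¹ := by
        rw [← hρF, ← map_mul]
        have : m₁⁻¹ = of b * q⁻¹ := by
          rw [hm₁eq, mul_inv_rev, inv_inv]
        rw [← this, ← keyr, map_inv]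
      have e2 : ρ q⁻¹ = of h * q⁻¹ * (of h)⁻¹ := by
        have e3 : ρ q⁻¹ = (of (h * b * h⁻¹))⁻¹ * (of h * (of b * q⁻¹) * (of h)⁻¹) := by
          rw [← e]; group
        rw [e3, ← map_inv, ← mul_assoc, ← mul_assoc, ← mul_assoc, ← map_mul, ← map_mul]
        have harg : (h * b * h⁻¹)⁻¹ * h * b = h := by group
        rw [harg]
      have e4 : ρ q = (ρ q⁻¹)⁻¹ := by rw [← map_inv, inv_inv]
      rw [e4, e2]
      simp [mul_inv_rev, mul_assoc]
    -- q is nontrivial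
    have hqne : q ≠ 1 := by
      intro h1
      rw [h1, one_mul] at hm₁eq
      by_cases hb1 : b = 1
      · rw [hb1] at hm₁eq; simp at hm₁eq; exact hm₁ne hm₁eq
      · have : Word.equiv m₁ = Word.cons b⁻¹ (Word.equiv (1 : CoprodI M))
            (by rw [equiv_one]; simp [Word.fstIdx, Word.empty]) (inv_ne_one.mpr hb1) := by
          rw [hm₁eq, ← map_inv]
          rw [show (of b⁻¹ : CoprodI M) = of b⁻¹ * 1 by rw [mul_one]]
          exact equiv_of_mul b⁻¹ (inv_ne_one.mpr hb1) 1 (by rw [equiv_one]; simp [Word.fstIdx, Word.empty])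
        have hfi := congrArg Word.fstIdx this
        rw [hm₁fst, Word.fstIdx_cons] at hfi
        simp at hfi
    -- endgame: compare reduced words of ρ q and of h * q * (of h)⁻¹
    set L := Word.equiv q with hL
    have hLnil : L.toList ≠ [] := toList_ne_nil_of_ne_one hqne
    have haux : ∀ (A : List (Σ b, M b)) (x : Σ b, M b), A ≠ [] → (A ++ [x]).head? = A.head? := by
      intro A x hA
      cases A with
      | nil => exact absurd rfl hA
      | cons a t => simp
    have hxp : (Word.equiv q⁻¹).fstIdx ≠ some false := by
      rw [hqinvw]; exact pr.fstIdx_ne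
    have h8 : invRev (Word.equiv q⁻¹) = L := by
      rw [equiv_inv, invRev_invRev]
    -- the first letter of q has index `true`
    have hLfst : L.fstIdx = some true := by
      by_cases hb1 : b = 1
      · have hmq : m₁ = q := by rw [hm₁eq, hb1]; simp
        rw [← hm₁fst, hmq]
      · have hm1eq2 : m₁ = (of b * q⁻¹)⁻¹ := by rw [hm₁eq]; simp [mul_inv_rev]
        have h5 : Word.equiv (of b * q⁻¹) = Word.cons b (Word.equiv q⁻¹) hxp hb1 :=
          equiv_of_mul b hb1 q⁻¹ hxp
        have h6 : (Word.equiv m₁).toList = L.toList ++ [⟨false, b⁻¹⟩] := by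
          rw [hm1eq2, equiv_inv, h5, invRev_cons_toList, h8]
        have h7 : (Word.equiv m₁).fstIdx = L.fstIdx := by
          unfold Word.fstIdx
          rw [h6, haux _ _ hLnil]
        rw [← h7, hm₁fst]
    -- the reduced word of q * (of h)⁻¹
    have hx1 : Word.equiv (of h * q⁻¹) = Word.cons h (Word.equiv q⁻¹) hxp hh :=
      equiv_of_mul h hh q⁻¹ hxp
    have hx2 : (Word.equiv (q * (of h)⁻¹)).toList = L.toList ++ [⟨false, h⁻¹⟩] := by
      have hq' : q * (of h)⁻¹ = (of h * q⁻¹)⁻¹ := by simp [mul_inv_rev]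
      rw [hq', equiv_inv, hx1, invRev_cons_toList, h8]
    have hx2fst : (Word.equiv (q * (of h)⁻¹)).fstIdx = some true := by
      unfold Word.fstIdx
      rw [hx2, haux _ _ hLnil]
      exact hLfst
    have hx2fst' : (Word.equiv (q * (of h)⁻¹)).fstIdx ≠ some false := by
      rw [hx2fst]; simp
    -- the reduced word of ρ q, via the letterwise map
    have hwmap : Word.equiv (ρ q) = wmap f hf L := by
      have e : ρ q = prod (wmap f hf L) := by
        rw [prod_wmap f hf ρ hρ L, hL, prod_equiv]
      rw [e, equiv_prod]
    have hfinal : Word.equiv (ρ q) = Word.cons h (Word.equiv (q * (of h)⁻¹)) hx2fst' hh := by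
      rw [keyq, mul_assoc]
      exact equiv_of_mul h hh _ hx2fst'
    have hlen := congrArg (fun w : Word M => w.toList.length) (hwmap.symm.trans hfinal)
    simp only [wmap, Word.cons, List.length_map, List.length_cons, hx2,
      List.length_append, List.length_cons, List.length_nil] at hlen
    omega

end MyFix

namespace MyFix

/-! ### The free product decomposition of `FreeGroup (Fin (n+1))` -/

abbrev X (n : ℕ) : Bool → Type := fun b => cond b Unit (Fin n)

abbrev Fam (n : ℕ) : Bool → Type := fun b => FreeGroup (X n b)

def Y (n : ℕ) : ∀ b, X n b → Fin (n + 1) :=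
  fun b => Bool.rec (motive := fun b => X n b → Fin (n + 1))
    (fun j => Fin.castSucc j) (fun _ => Fin.last n) b

def fwd (n : ℕ) : FreeGroup (Fin (n + 1)) →* CoprodI (Fam n) :=
  FreeGroup.lift fun i =>
    if h : i = Fin.last n then CoprodI.of (M := Fam n) (i := true) (FreeGroup.of ())
    else CoprodI.of (M := Fam n) (i := false) (FreeGroup.of (i.castPred h))

def bwd (n : ℕ) : CoprodI (Fam n) →* FreeGroup (Fin (n + 1)) :=
  CoprodI.lift fun b => FreeGroup.lift fun x => FreeGroup.of (Y n b x)

theorem fwd_of_last (n : ℕ) :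
    fwd n (FreeGroup.of (Fin.last n)) = CoprodI.of (M := Fam n) (i := true) (FreeGroup.of ()) := by
  simp [fwd]

theorem fwd_of_ne (n : ℕ) (i : Fin (n + 1)) (h : i ≠ Fin.last n) :
    fwd n (FreeGroup.of i)
      = CoprodI.of (M := Fam n) (i := false) (FreeGroup.of (i.castPred h)) := by
  simp [fwd, h]

theorem bwd_of_false (n : ℕ) (j : Fin n) :
    bwd n (CoprodI.of (M := Fam n) (i := false) (FreeGroup.of j))
      = FreeGroup.of j.castSucc := by
  simp only [bwd, CoprodI.lift_of]
  exact FreeGroup.lift_apply_of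

theorem bwd_of_true (n : ℕ) :
    bwd n (CoprodI.of (M := Fam n) (i := true) (FreeGroup.of ()))
      = FreeGroup.of (Fin.last n) := by
  simp only [bwd, CoprodI.lift_of]
  exact FreeGroup.lift_apply_of

theorem bwd_comp_fwd (n : ℕ) : (bwd n).comp (fwd n) = MonoidHom.id _ := by
  apply FreeGroup.ext_hom
  intro i
  simp only [MonoidHom.comp_apply, MonoidHom.id_apply]
  by_cases h : i = Fin.last n
  · subst h
    rw [fwd_of_last, bwd_of_true]
  · rw [fwd_of_ne n i h, bwd_of_false, Fin.castSucc_castPred]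

theorem bwd_fwd (n : ℕ) (x : FreeGroup (Fin (n + 1))) : bwd n (fwd n x) = x :=
  DFunLike.congr_fun (bwd_comp_fwd n) x

theorem fwd_comp_bwd (n : ℕ) : (fwd n).comp (bwd n) = MonoidHom.id _ := by
  apply CoprodI.ext_hom
  intro b
  cases b with
  | false =>
    apply FreeGroup.ext_hom
    intro j
    show fwd n (bwd n (CoprodI.of (M := Fam n) (i := false) (FreeGroup.of j)))
      = CoprodI.of (M := Fam n) (i := false) (FreeGroup.of j)
    rw [bwd_of_false, fwd_of_ne n _ (by simp [Fin.ext_iff, Fin.castSucc_lt_last j |>.ne])]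
    rw [Fin.castPred_castSucc]
  | true =>
    apply FreeGroup.ext_hom
    intro u
    show fwd n (bwd n (CoprodI.of (M := Fam n) (i := true) (FreeGroup.of u)))
      = CoprodI.of (M := Fam n) (i := true) (FreeGroup.of u)
    cases u
    rw [bwd_of_true, fwd_of_last]

theorem fwd_bwd (n : ℕ) (x : CoprodI (Fam n)) : fwd n (bwd n x) = x :=
  DFunLike.congr_fun (fwd_comp_bwd n) x

theorem fwd_injective (n : ℕ) : Function.Injective (fwd n) :=
  Function.LeftInverse.injective (bwd_fwd n)

end MyFix

open MyFix in
theorem stmt_1 (n : ℕ) (w : FreeGroup (Fin (n + 1)))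
    (hw_mem : w ∈ Subgroup.closure (FreeGroup.of '' {i : Fin (n + 1) | i ≠ Fin.last n}))
    (hw_ne : w ≠ 1)
    (φ : FreeGroup (Fin (n + 1)) ≃* FreeGroup (Fin (n + 1)))
    (hφ₁ : ∀ i : Fin (n + 1), i ≠ Fin.last n → φ (FreeGroup.of i) = FreeGroup.of i)
    (hφ₂ : φ (FreeGroup.of (Fin.last n)) = w⁻¹ * FreeGroup.of (Fin.last n) * w) :
    ∀ g : FreeGroup (Fin (n + 1)),
      φ g = g ↔ g ∈ Subgroup.closure (FreeGroup.of '' {i : Fin (n + 1) | i ≠ Fin.last n}) := by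
  intro g
  set S : Set (FreeGroup (Fin (n + 1))) := FreeGroup.of '' {i : Fin (n + 1) | i ≠ Fin.last n}
    with hS
  have hfix : ∀ u ∈ Subgroup.closure S, φ u = u := by
    intro u hu
    induction hu using Subgroup.closure_induction with
    | mem x hx => obtain ⟨i, hi, rfl⟩ := hx; exact hφ₁ i hi
    | one => exact map_one φ
    | mul x y _ _ hx hy => rw [map_mul, hx, hy]
    | inv x _ hx => rw [map_inv, hx]
  constructor
  swap
  · exact hfix g
  intro hg
  letI : ∀ b, DecidableEq (Fam n b) := fun b => Classical.decEq _
  have hBwd : ∀ a : Fam n false, bwd n (CoprodI.of a) ∈ Subgroup.closure S := by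
    intro a
    induction a using FreeGroup.induction_on with
    | C1 => rw [map_one, map_one]; exact Subgroup.one_mem _
    | of j =>
      show bwd n (CoprodI.of (M := Fam n) (i := false) (FreeGroup.of j)) ∈ Subgroup.closure S
      rw [bwd_of_false]
      exact Subgroup.subset_closure ⟨Fin.castSucc j, (Fin.castSucc_lt_last j).ne, rfl⟩
    | inv_of j hj => rw [map_inv, map_inv]; exact Subgroup.inv_mem _ hj
    | mul x y hx hy => rw [map_mul, map_mul]; exact Subgroup.mul_mem _ hx hy
  have hwR' : ∀ v ∈ Subgroup.closure S, fwd n v ∈ (CoprodI.of (M := Fam n) (i := false)).range := by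
    intro v hv
    induction hv using Subgroup.closure_induction with
    | mem x hx =>
      obtain ⟨i, hi, rfl⟩ := hx
      rw [fwd_of_ne n i hi]
      exact ⟨FreeGroup.of (i.castPred hi), rfl⟩
    | one => rw [map_one]; exact Subgroup.one_mem _
    | mul x y _ _ hx hy => rw [map_mul]; exact Subgroup.mul_mem _ hx hy
    | inv x _ hx => rw [map_inv]; exact Subgroup.inv_mem _ hx
  obtain ⟨hw, hhw⟩ := hwR' w hw_mem
  have hwne : hw ≠ 1 := by
    intro h1
    apply hw_ne
    apply fwd_injective n
    rw [← hhw, h1, map_one, map_one]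
  set c : CoprodI (Fam n) := CoprodI.of (M := Fam n) (i := false) hw with hc
  set ρ : CoprodI (Fam n) →* CoprodI (Fam n) :=
    (MulAut.conj c).toMonoidHom.comp ((fwd n).comp (φ.toMonoidHom.comp (bwd n))) with hρdef
  have hρ_apply : ∀ x, ρ x = c * fwd n (φ (bwd n x)) * c⁻¹ := fun x => rfl
  have hρF : ∀ a : Fam n false, ρ (CoprodI.of a) = CoprodI.of (hw * a * hw⁻¹) := by
    intro a
    rw [hρ_apply, hfix _ (hBwd a), fwd_bwd, map_mul, map_mul, map_inv]
  have hρT : ∀ t : Fam n true, ρ (CoprodI.of t) = CoprodI.of t := by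
    intro t
    have key : ρ.comp (CoprodI.of (M := Fam n) (i := true)) = CoprodI.of := by
      apply FreeGroup.ext_hom
      intro u
      cases u
      show ρ (CoprodI.of (M := Fam n) (i := true) (FreeGroup.of ())) = CoprodI.of (M := Fam n) (i := true) (FreeGroup.of ())
      rw [hρ_apply, bwd_of_true, hφ₂, map_mul, map_mul, map_inv, fwd_of_last, ← hhw]
      group
    exact DFunLike.congr_fun key t
  have hcg : ρ (fwd n g) = c * fwd n g * c⁻¹ := by rw [hρ_apply, bwd_fwd, hg]
  obtain ⟨a, ha⟩ := core ρ hw hwne hρF hρT (fwd n g) hcg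
  have hga : g = bwd n (CoprodI.of a) := by rw [← ha, bwd_fwd]
  rw [hga]
  exact hBwd a
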